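/- Let g, h : ℕ → ℕ be non-decreasing functions, B a natural number, and Θ a natural number. Define f : ℕ → ℕ by f(x) = B if x ≤ Θ, and f(x) = max(g(x), f(x-1)) + h(x) if x > Θ. Then for all x > Θ, f(x) ≤ max(g(x), B) + (x - Θ - 1) · max(g(x), h(x-1)) + h(x). -/
import Mathlib


theorem max_recurrence_upper_bound (Θ B : ℕ) (g h : ℕ → ℕ)
    (hg : Monotone g) (hh : Monotone h) (f : ℕ → ℕ)
    (hbase : ∀ x, x ≤ Θ → f x = B)
    (hrec : ∀ x, x > Θ → f x = max (g x) (f (x - 1)) + h x) :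
    ∀ x, x > Θ → f x ≤ max (g x) B + (x - Θ - 1) * max (g x) (h (x - 1)) + h x := by
  intro x hx
  induction x, hx using Nat.le_induction with
  | base =>
    rw [hrec _ (Nat.lt_succ_of_le le_rfl)]
    simp [hbase Θ le_rfl]
  | succ n hn ih =>
    rw [hrec (n + 1) (by omega)]
    simp only [Nat.add_sub_cancel]
    have hM : max (g n) (h (n - 1)) ≤ max (g (n + 1)) (h n) := by
      exact max_le_max (hg (by omega)) (hh (by omega))
    have h1 : f n ≤ max (g (n + 1)) B + (n + 1 - Θ - 1) * max (g (n + 1)) (h n) := by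
      calc f n ≤ max (g n) B + (n - Θ - 1) * max (g n) (h (n - 1)) + h n := ih
        _ ≤ max (g (n + 1)) B + (n - Θ - 1) * max (g (n + 1)) (h n)
              + max (g (n + 1)) (h n) := by
            gcongr
            · exact hg (by omega)
            · exact le_max_right _ _
        _ = max (g (n + 1)) B + (n - Θ - 1 + 1) * max (g (n + 1)) (h n) := by ring
        _ = max (g (n + 1)) B + (n + 1 - Θ - 1) * max (g (n + 1)) (h n) := by
            congr 2; omega
    have h2 : g (n + 1) ≤ max (g (n + 1)) B + (n + 1 - Θ - 1) * max (g (n + 1)) (h n) :=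
      le_trans (le_max_left _ _) (Nat.le_add_right _ _)
    exact Nat.add_le_add_right (max_le h2 h1) _
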